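/- For all natural numbers k, m, n, 2^n · F(k·n + 2m) = Σ_{i=0}^{n} C(n, i)·F(k·i + m)·L(k·(n−i) + m), where C(n, i) denotes the binomial coefficient. -/

import Mathlib

noncomputable def genFib (a b : ℝ) : ℕ → ℝ
  | 0 => 0
  | 1 => 1
  | n + 2 => a * genFib a b (n + 1) + b * genFib a b n

noncomputable def genLuc (a b : ℝ) : ℕ → ℝ
  | 0 => 2
  | 1 => a
  | n + 2 => a * genLuc a b (n + 1) + b * genLuc a b n

lemma genLuc_eq (a b : ℝ) : ∀ n, genLuc a b n = 2 * genFib a b (n + 1) - a * genFib a b n := by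
  intro n
  induction n using Nat.twoStepInduction with
  | zero => simp [genFib, genLuc]
  | one => simp [genFib, genLuc]; ring
  | more n ih1 ih2 =>
    show genLuc a b (n + 2) = _
    rw [show n + 2 + 1 = n + 1 + 2 from rfl]
    simp only [genLuc, genFib, ih1, ih2]
    ring

lemma key_add (a b : ℝ) (p : ℕ) : ∀ q, 2 * genFib a b (p + q) =
    genFib a b p * genLuc a b q + genLuc a b p * genFib a b q := by
  intro q
  induction q using Nat.twoStepInduction with
  | zero => simp [genFib, genLuc]; ring
  | one =>
    simp only [genFib, genLuc, genLuc_eq]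
    ring
  | more q ih1 ih2 =>
    have h : p + (q + 2) = (p + q) + 2 := by ring
    rw [h]
    show 2 * (a * genFib a b (p + q + 1) + b * genFib a b (p + q)) = _
    rw [show p + q + 1 = p + (q + 1) from rfl]
    show _ = genFib a b p * (a * genLuc a b (q + 1) + b * genLuc a b q) +
      genLuc a b p * (a * genFib a b (q + 1) + b * genFib a b q)
    linear_combination a * ih2 + b * ih1

theorem genFib_binomial_identity (a b : ℝ) (k m n : ℕ) :
    (2 : ℝ) ^ n * genFib a b (k * n + 2 * m) =
      ∑ i ∈ Finset.range (n + 1),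
        (n.choose i : ℝ) * genFib a b (k * i + m) * genLuc a b (k * (n - i) + m) := by
  set S := ∑ i ∈ Finset.range (n + 1),
        (n.choose i : ℝ) * genFib a b (k * i + m) * genLuc a b (k * (n - i) + m) with hS
  have hrefl : S = ∑ i ∈ Finset.range (n + 1),
      (n.choose i : ℝ) * genFib a b (k * (n - i) + m) * genLuc a b (k * i + m) := by
    rw [hS, ← Finset.sum_range_reflect]
    apply Finset.sum_congr rfl
    intro i hi
    have hi' : i ≤ n := Nat.lt_succ_iff.mp (Finset.mem_range.mp hi)
    have h1 : n + 1 - 1 - i = n - i := by omega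
    have h2 : n - (n - i) = i := by omega
    rw [h1, h2, Nat.choose_symm hi']
  have h2S : 2 * S = 2 ^ (n + 1) * genFib a b (k * n + 2 * m) := by
    have : 2 * S = S + S := by ring
    rw [this]
    nth_rewrite 2 [hrefl]
    rw [hS, ← Finset.sum_add_distrib]
    have : ∀ i ∈ Finset.range (n + 1),
        (n.choose i : ℝ) * genFib a b (k * i + m) * genLuc a b (k * (n - i) + m) +
        (n.choose i : ℝ) * genFib a b (k * (n - i) + m) * genLuc a b (k * i + m) =
        (n.choose i : ℝ) * (2 * genFib a b (k * n + 2 * m)) := by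
      intro i hi
      have hi' : i ≤ n := Nat.lt_succ_iff.mp (Finset.mem_range.mp hi)
      have hsum : (k * i + m) + (k * (n - i) + m) = k * n + 2 * m := by
        have : k * i + k * (n - i) = k * n := by
          rw [← Nat.mul_add]
          congr 1
          omega
        omega
      rw [← hsum, key_add]
      ring
    rw [Finset.sum_congr rfl this, ← Finset.sum_mul,
      show ∑ i ∈ Finset.range (n + 1), (n.choose i : ℝ) = 2 ^ n by
        rw [← Nat.cast_sum, Nat.sum_range_choose]; push_cast; ring]
    ring
  have hp : (2:ℝ) ^ (n + 1) = 2 * 2 ^ n := by ring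
  rw [hp] at h2S
  linarith
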